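/- Let S be a set, f : Set S → Set S monotone, and 𝒳 a family of support orderings for f. Then the pair (⋃_{(X,≺)∈𝒳} X, ⋃_{(X,≺)∈𝒳} ≺) is a support ordering for f. -/
import Mathlib


/-- `(X, r)` is a support ordering for `f`. -/
def IsSupportOrdering {S : Type*} (f : Set S → Set S) (X : Set S) (r : S → S → Prop) : Prop :=
  ∀ x ∈ X, x ∈ f {x' ∈ X | r x' x}

theorem union_of_supportOrderings {S : Type*} {ι : Type*} (f : Set S → Set S) (hf : Monotone f)
    (X : ι → Set S) (r : ι → S → S → Prop)
    (hrX : ∀ i, ∀ x y, r i x y → x ∈ X i ∧ y ∈ X i)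
    (hsupp : ∀ i, IsSupportOrdering f (X i) (r i)) :
    IsSupportOrdering f (⋃ i, X i) (fun x y => ∃ i, r i x y) := by
  intro x hx
  obtain ⟨i, hi⟩ := Set.mem_iUnion.mp hx
  refine hf ?_ (hsupp i x hi)
  rintro x' ⟨hx', hr⟩
  exact ⟨Set.mem_iUnion.mpr ⟨i, hx'⟩, i, hr⟩
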